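/- Let K ≥ 2 and u ∈ EuclideanSpace ℝ (Fin K). Consider the feasible set F of all d ∈ EuclideanSpace ℝ (Fin K) such that (a) d i + d j ≥ 0 for all distinct indices i ≠ j, and (b) d i − d j = u i − u j for all indices i, j. Then d* = Shift-All(u) belongs to F, and for every d ∈ F one has ‖d* − u‖ ≤ ‖d − u‖, with equality only if d = d*. That is, Shift-All(u) is the unique minimizer of ‖d − u‖² over F. -/

import Mathlib

/-- Smallest entry of a vector `d : Fin K → ℝ` (for `K ≥ 1`). -/
noncomputable def min1 {K : ℕ} (d : Fin K → ℝ) : ℝ := ⨅ i, d i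

/-- Second smallest entry of a vector `d : Fin K → ℝ` (for `K ≥ 2`), expressed as the
minimum over pairs of distinct indices of the max of the two corresponding entries. -/
noncomputable def min2 {K : ℕ} (d : Fin K → ℝ) : ℝ :=
  ⨅ p : {q : Fin K × Fin K // q.1 ≠ q.2}, max (d p.val.1) (d p.val.2)

/-- The Shift-All map on `EuclideanSpace ℝ (Fin K)`:
shifts every entry by `max 0 (-(min1 u + min2 u)/2)`. -/
noncomputable def shiftAll {K : ℕ} (u : EuclideanSpace ℝ (Fin K)) : EuclideanSpace ℝ (Fin K) :=
  WithLp.toLp 2 (fun k => u k + max 0 (-(min1 (fun i => u i) + min2 (fun i => u i)) / 2))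

lemma norm_const_euclidean {K : ℕ} (x : EuclideanSpace ℝ (Fin K)) (t : ℝ)
    (h : ∀ i, x i = t) : ‖x‖ = |t| * Real.sqrt K := by
  rw [EuclideanSpace.norm_eq]
  have h2 : ∀ i : Fin K, ‖x i‖ ^ 2 = t ^ 2 := by intro i; rw [h i, Real.norm_eq_abs, sq_abs]
  rw [Finset.sum_congr rfl fun i _ => h2 i, Finset.sum_const, Finset.card_univ, Fintype.card_fin,
    nsmul_eq_mul, Real.sqrt_mul (by positivity), Real.sqrt_sq_eq_abs]
  ring

theorem shiftAll_is_unique_projection {K : ℕ} (hK : 2 ≤ K) (u : EuclideanSpace ℝ (Fin K)) :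
    ((∀ i j : Fin K, i ≠ j → shiftAll u i + shiftAll u j ≥ 0) ∧
      (∀ i j : Fin K, shiftAll u i - shiftAll u j = u i - u j)) ∧
    ∀ d : EuclideanSpace ℝ (Fin K),
      ((∀ i j : Fin K, i ≠ j → d i + d j ≥ 0) ∧ (∀ i j : Fin K, d i - d j = u i - u j)) →
      ‖shiftAll u - u‖ ≤ ‖d - u‖ ∧ (‖shiftAll u - u‖ = ‖d - u‖ → d = shiftAll u) := by
  have hpos : (0:ℕ) < K := lt_of_lt_of_le (by norm_num) hK
  haveI : NeZero K := ⟨hpos.ne'⟩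
  haveI : Nontrivial (Fin K) := Fin.nontrivial_iff_two_le.mpr hK
  set v : Fin K → ℝ := fun i => u i with hv
  set m : ℝ := min1 v + min2 v with hm
  set c : ℝ := max 0 (-m / 2) with hc
  have hc0 : (0:ℝ) ≤ c := le_max_left _ _
  have hcm : -m / 2 ≤ c := le_max_right _ _
  -- argmin
  obtain ⟨i0, hi0⟩ := Finite.exists_min v
  have hmin1 : min1 v = v i0 :=
    le_antisymm (ciInf_le (Finite.bddBelow_range v) i0) (le_ciInf hi0)
  obtain ⟨j0', hj0'⟩ := exists_ne i0
  haveI : Nonempty {j : Fin K // j ≠ i0} := ⟨⟨j0', hj0'⟩⟩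
  obtain ⟨j0, hj0min⟩ := Finite.exists_min (fun j : {j : Fin K // j ≠ i0} => v j.1)
  haveI hne : Nonempty {q : Fin K × Fin K // q.1 ≠ q.2} := ⟨⟨(j0', i0), hj0'⟩⟩
  have h2le : v j0.1 ≤ min2 v := by
    apply le_ciInf
    intro p
    rcases ne_or_eq p.1.1 i0 with h | h
    · exact le_trans (hj0min ⟨p.1.1, h⟩) (le_max_left _ _)
    · have h' : p.1.2 ≠ i0 := by rw [← h]; exact p.2.symm
      exact le_trans (hj0min ⟨p.1.2, h'⟩) (le_max_right _ _)
  have hpair : v i0 + v j0.1 ≤ m := by rw [hm, hmin1]; linarith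
  have hj0ne : i0 ≠ j0.1 := fun h => j0.2 h.symm
  -- key inequality
  have hkey : ∀ i j : Fin K, i ≠ j → m ≤ v i + v j := by
    intro i j hij
    have h1 : min1 v ≤ min (v i) (v j) :=
      le_min (ciInf_le (Finite.bddBelow_range v) i) (ciInf_le (Finite.bddBelow_range v) j)
    have h2 : min2 v ≤ max (v i) (v j) := by
      unfold min2
      exact ciInf_le (Finite.bddBelow_range _) (⟨(i, j), hij⟩ : {q : Fin K × Fin K // q.1 ≠ q.2})
    have h3 := min_add_max (v i) (v j)
    rw [hm]
    have h4 : min (v i) (v j) ≤ v i := min_le_left _ _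
    linarith
  have hsa : ∀ k, shiftAll u k = v k + c := by intro k; rfl
  have hsdiff : ‖shiftAll u - u‖ = c * Real.sqrt K := by
    rw [norm_const_euclidean (shiftAll u - u) c fun k => by
      show shiftAll u k - u k = c
      rw [hsa]; show v k + c - v k = c; ring]
    rw [abs_of_nonneg hc0]
  refine ⟨⟨?_, ?_⟩, ?_⟩
  · intro i j hij
    have := hkey i j hij
    rw [hsa, hsa]
    have : m + 2 * c ≥ 0 := by linarith
    linarith [hkey i j hij]
  · intro i j
    rw [hsa, hsa]; show v i + c - (v j + c) = v i - v j; ring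
  · rintro d ⟨hd1, hd2⟩
    set t : ℝ := d i0 - u i0 with htdef
    have hdt : ∀ k, d k = v k + t := by
      intro k
      have := hd2 k i0
      show d k = u k + t
      rw [htdef]; linarith
    have hdiff : ‖d - u‖ = |t| * Real.sqrt K := by
      exact norm_const_euclidean (d - u) t fun k => by
        show d k - u k = t
        rw [hdt]; show v k + t - v k = t; ring
    have ht : -m / 2 ≤ t := by
      have h0 := hd1 i0 j0.1 hj0ne
      rw [hdt, hdt] at h0
      linarith
    have hct : c ≤ |t| := by
      have h1 : t ≤ |t| := le_abs_self t
      have h2 : -m / 2 ≤ |t| := le_trans ht h1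
      exact max_le (abs_nonneg t) h2
    rw [hsdiff, hdiff]
    constructor
    · exact mul_le_mul_of_nonneg_right hct (Real.sqrt_nonneg _)
    · intro heq
      have hKpos : (0:ℝ) < Real.sqrt K := Real.sqrt_pos.mpr (by exact_mod_cast hpos)
      have hcabs : c = |t| := mul_right_cancel₀ hKpos.ne' heq
      have htc : t = c := by
        have hcle : c ≤ max 0 t := max_le_max le_rfl ht
        rcases abs_cases t with ⟨h1, h2⟩ | ⟨h1, h2⟩
        · rw [hcabs, h1]
        · have : max 0 t = 0 := max_eq_left h2.le
          rw [this] at hcle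
          have : c = 0 := le_antisymm hcle hc0
          rw [hcabs, h1] at this
          linarith [hcabs, h1]
      ext k
      rw [hdt, hsa, htc]
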